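/- Let u ∈ C²[0,π] with u(0) = u(π) = 0 and suppose u satisfies -u'' = λ u' + u + (λ - u²)u² on (0,π), with u(x) > 0 for all x ∈ (0,π). Then λ > 0. -/

import Mathlib

open Set Real MeasureTheory intervalIntegral Topology Filter

/-- Sharp Poincaré (Wirtinger) inequality on `[0,π]` with Dirichlet boundary conditions. -/
theorem my_poincare (u u' : ℝ → ℝ)
    (hu' : ∀ x ∈ Icc (0:ℝ) π, HasDerivWithinAt u (u' x) (Icc 0 π) x)
    (hcu' : ContinuousOn u' (Icc 0 π))
    (h0 : u 0 = 0) (hp : u π = 0) :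
    ∫ x in (0:ℝ)..π, (u x)^2 ≤ ∫ x in (0:ℝ)..π, (u' x)^2 := by
  have hπ : (0:ℝ) < π := Real.pi_pos
  have hcu : ContinuousOn u (Icc 0 π) := fun x hx => (hu' x hx).continuousWithinAt
  set g : ℝ → ℝ := fun x => (u' x)^2 - (u x)^2 with hg
  have hcg : ContinuousOn g (Icc 0 π) := (hcu'.pow 2).sub (hcu.pow 2)
  have hgi : IntervalIntegrable g volume 0 π :=
    (hcg.mono (by rw [uIcc_of_le hπ.le])).intervalIntegrable
  set W : ℝ → ℝ := fun x => (u x)^2 * (cos x / sin x) with hW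
  set H : ℝ → ℝ := fun x => (∫ t in (0:ℝ)..x, g t) - W x with hH
  -- derivative of H on the interior
  have hDer : ∀ x ∈ Ioo (0:ℝ) π, HasDerivAt H ((u' x - u x * (cos x / sin x))^2) x := by
    intro x hx
    have hxI : Icc (0:ℝ) π ∈ 𝓝 x := Icc_mem_nhds hx.1 hx.2
    have hsin : 0 < sin x := Real.sin_pos_of_pos_of_lt_pi hx.1 hx.2
    have hu_at : HasDerivAt u (u' x) x := (hu' x (Ioo_subset_Icc_self hx)).hasDerivAt hxI
    have h1 : HasDerivAt (fun y => ∫ t in (0:ℝ)..y, g t) (g x) x := by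
      refine integral_hasDerivAt_right (hgi.mono_set ?_) ?_ ?_
      · rw [uIcc_of_le hπ.le, uIcc_of_le hx.1.le]
        exact Icc_subset_Icc le_rfl hx.2.le
      · exact (hcg.mono Ioo_subset_Icc_self).stronglyMeasurableAtFilter isOpen_Ioo x hx
      · exact (hcg x (Ioo_subset_Icc_self hx)).continuousAt hxI
    have h2 : HasDerivAt (fun y => cos y / sin y)
        ((-sin x * sin x - cos x * cos x) / (sin x)^2) x :=
      (Real.hasDerivAt_cos x).div (Real.hasDerivAt_sin x) hsin.ne'
    have h3 : HasDerivAt W (2 * u x * u' x * (cos x / sin x)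
        + (u x)^2 * ((-sin x * sin x - cos x * cos x) / (sin x)^2)) x := by
      have : HasDerivAt W _ x := (hu_at.pow 2).mul h2
      convert this using 1
      norm_num only [Pi.pow_apply]
      ring
    have h4 : HasDerivAt H (g x - (2 * u x * u' x * (cos x / sin x)
        + (u x)^2 * ((-sin x * sin x - cos x * cos x) / (sin x)^2))) x := h1.sub h3
    convert h4 using 1
    have hs2 : sin x ^ 2 + cos x ^ 2 = 1 := Real.sin_sq_add_cos_sq x
    field_simp [hg]
    simp only [hg]
    ring
  -- continuity of H on [0, π]
  have hHc : ContinuousOn H (Icc 0 π) := by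
    have hprim : ContinuousOn (fun x => ∫ t in (0:ℝ)..x, g t) (Icc 0 π) := by
      have := continuousOn_primitive_interval (μ := volume) (a := (0:ℝ)) (b := π)
        (f := g) (by rw [uIcc_of_le hπ.le]; exact (hcg.mono le_rfl).integrableOn_compact isCompact_Icc)
      rwa [uIcc_of_le hπ.le] at this
    have hWc : ContinuousOn W (Icc 0 π) := by
      intro x hx
      rcases eq_or_lt_of_le hx.1 with h0x | h0x
      · -- x = 0
        subst h0x
        rw [← continuousWithinAt_diff_self]
        have hW0 : W 0 = 0 := by simp [hW, h0]
        unfold ContinuousWithinAt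
        rw [hW0]
        have t1 : Filter.Tendsto (fun y => u y / y) (𝓝[Icc 0 π \ {0}] 0) (𝓝 (u' 0)) := by
          have := (hasDerivWithinAt_iff_tendsto_slope).mp (hu' 0 (left_mem_Icc.mpr hπ.le))
          refine this.congr (fun y => ?_)
          simp [slope_def_field, h0]
        have t2 : Filter.Tendsto u (𝓝[Icc 0 π \ {0}] 0) (𝓝 0) := by
          have := (hcu 0 (left_mem_Icc.mpr hπ.le)).tendsto
          rw [h0] at this
          exact this.mono_left (nhdsWithin_mono _ diff_subset)
        have t3 : Filter.Tendsto (fun y => y / sin y) (𝓝[Icc 0 π \ {0}] 0) (𝓝 1) := by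
          have hs : Filter.Tendsto (slope sin 0) (𝓝[≠] 0) (𝓝 (cos 0)) :=
            hasDerivAt_iff_tendsto_slope.mp (Real.hasDerivAt_sin 0)
          have hs' : Filter.Tendsto (fun y => sin y / y) (𝓝[≠] 0) (𝓝 1) := by
            rw [← Real.cos_zero]
            refine hs.congr fun y => ?_
            simp [slope_def_field]
          have : Filter.Tendsto (fun y => (sin y / y)⁻¹) (𝓝[≠] 0) (𝓝 1) := by
            simpa using hs'.inv₀ one_ne_zero
          have := this.mono_left (nhdsWithin_mono 0
            (show Icc (0:ℝ) π \ {0} ⊆ {(0:ℝ)}ᶜ from fun y hy => hy.2))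
          refine this.congr fun y => ?_
          rw [inv_div]
        have t4 : Filter.Tendsto (fun y => cos y) (𝓝[Icc 0 π \ {0}] 0) (𝓝 1) := by
          have := (Real.continuous_cos.tendsto 0)
          rw [Real.cos_zero] at this
          exact this.mono_left nhdsWithin_le_nhds
        have tall := ((t1.mul t2).mul (t3.mul t4))
        rw [show u' 0 * 0 * (1 * 1) = 0 by ring] at tall
        refine tall.congr' ?_
        filter_upwards [self_mem_nhdsWithin] with y hy
        rcases eq_or_ne y π with rfl | hyπ
        · simp [hW, hp]
        · have hy0 : 0 < y := lt_of_le_of_ne hy.1.1 (Ne.symm (by simpa using hy.2))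
          have hyp : y < π := lt_of_le_of_ne hy.1.2 hyπ
          have hsy : sin y ≠ 0 := (Real.sin_pos_of_pos_of_lt_pi hy0 hyp).ne'
          simp only [hW]
          field_simp
      · rcases eq_or_lt_of_le hx.2 with hxπ | hxπ
        · -- x = π
          subst hxπ
          rw [← continuousWithinAt_diff_self]
          have hWπ : W π = 0 := by simp [hW, hp]
          unfold ContinuousWithinAt
          rw [hWπ]
          have t1 : Filter.Tendsto (fun y => u y / (y - π)) (𝓝[Icc 0 π \ {π}] π) (𝓝 (u' π)) := by
            have := (hasDerivWithinAt_iff_tendsto_slope).mp (hu' π (right_mem_Icc.mpr hπ.le))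
            refine this.congr (fun y => ?_)
            simp [slope_def_field, hp]
          have t2 : Filter.Tendsto u (𝓝[Icc 0 π \ {π}] π) (𝓝 0) := by
            have := (hcu π (right_mem_Icc.mpr hπ.le)).tendsto
            rw [hp] at this
            exact this.mono_left (nhdsWithin_mono _ diff_subset)
          have t3 : Filter.Tendsto (fun y => (y - π) / sin y) (𝓝[Icc 0 π \ {π}] π) (𝓝 (-1)) := by
            have hs : Filter.Tendsto (slope sin π) (𝓝[≠] π) (𝓝 (cos π)) :=
              hasDerivAt_iff_tendsto_slope.mp (Real.hasDerivAt_sin π)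
            have hs' : Filter.Tendsto (fun y => sin y / (y - π)) (𝓝[≠] π) (𝓝 (-1)) := by
              rw [← Real.cos_pi]
              refine hs.congr fun y => ?_
              simp [slope_def_field]
            have h5 := hs'.inv₀ (by norm_num : (-1:ℝ) ≠ 0)
            norm_num at h5
            exact h5.mono_left (nhdsWithin_mono π
              (show Icc (0:ℝ) π \ {π} ⊆ {(π:ℝ)}ᶜ from fun y hy => hy.2))
          have t4 : Filter.Tendsto (fun y => cos y) (𝓝[Icc 0 π \ {π}] π) (𝓝 (-1)) := by
            have := (Real.continuous_cos.tendsto π)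
            rw [Real.cos_pi] at this
            exact this.mono_left nhdsWithin_le_nhds
          have tall := ((t1.mul t2).mul (t3.mul t4))
          rw [show u' π * 0 * (-1 * -1) = 0 by ring] at tall
          refine tall.congr' ?_
          filter_upwards [self_mem_nhdsWithin] with y hy
          rcases eq_or_ne y 0 with rfl | hy0
          · simp [hW, h0]
          · have hy0' : 0 < y := lt_of_le_of_ne hy.1.1 (Ne.symm hy0)
            have hyp : y < π := lt_of_le_of_ne hy.1.2 (by simpa using hy.2)
            have hsy : sin y ≠ 0 := (Real.sin_pos_of_pos_of_lt_pi hy0' hyp).ne'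
            have hyπ : y - π ≠ 0 := sub_ne_zero.mpr (by simpa using hy.2)
            simp only [hW]
            field_simp
        · -- interior point
          have hxo : x ∈ Ioo (0:ℝ) π := ⟨h0x, hxπ⟩
          have hxI : Icc (0:ℝ) π ∈ 𝓝 x := Icc_mem_nhds h0x hxπ
          have hsin : 0 < sin x := Real.sin_pos_of_pos_of_lt_pi h0x hxπ
          exact (((hcu x hx).continuousAt hxI).pow 2).mul
            (Real.continuous_cos.continuousAt.div
              Real.continuous_sin.continuousAt hsin.ne') |>.continuousWithinAt
    exact hprim.sub hWc
  -- monotonicity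
  have hmono : MonotoneOn H (Icc 0 π) := by
    apply monotoneOn_of_deriv_nonneg (convex_Icc 0 π) hHc
    · rw [interior_Icc]
      intro x hx
      exact (hDer x hx).differentiableAt.differentiableWithinAt
    · rw [interior_Icc]
      intro x hx
      rw [(hDer x hx).deriv]
      positivity
  have key := hmono (left_mem_Icc.mpr hπ.le) (right_mem_Icc.mpr hπ.le) hπ.le
  have hH0 : H 0 = 0 := by simp [hH, hW, h0]
  have hHπ : H π = ∫ t in (0:ℝ)..π, g t := by simp [hH, hW, hp]
  rw [hH0, hHπ] at key
  have hsplit : ∫ t in (0:ℝ)..π, g t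
      = (∫ x in (0:ℝ)..π, (u' x)^2) - ∫ x in (0:ℝ)..π, (u x)^2 := by
    apply intervalIntegral.integral_sub
    · exact ((hcu'.pow 2).mono (by rw [uIcc_of_le hπ.le])).intervalIntegrable
    · exact ((hcu.pow 2).mono (by rw [uIcc_of_le hπ.le])).intervalIntegrable
  rw [hsplit] at key
  linarith

theorem positive_solution_lambda_pos (lam : ℝ) (u u' u'' : ℝ → ℝ)
    (hu' : ∀ x ∈ Icc (0:ℝ) π, HasDerivWithinAt u (u' x) (Icc 0 π) x)
    (hu'' : ∀ x ∈ Icc (0:ℝ) π, HasDerivWithinAt u' (u'' x) (Icc 0 π) x)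
    (hcont : ContinuousOn u'' (Icc 0 π))
    (hode : ∀ x ∈ Ioo (0:ℝ) π,
      -(u'' x) = lam * u' x + u x + (lam - (u x)^2) * (u x)^2)
    (hbc0 : u 0 = 0) (hbcpi : u π = 0)
    (hpos : ∀ x ∈ Ioo (0:ℝ) π, 0 < u x) :
    0 < lam := by
  have hπ : (0:ℝ) < π := Real.pi_pos
  have hcu : ContinuousOn u (Icc 0 π) := fun x hx => (hu' x hx).continuousWithinAt
  have hcu' : ContinuousOn u' (Icc 0 π) := fun x hx => (hu'' x hx).continuousWithinAt
  have hii : ∀ f : ℝ → ℝ, ContinuousOn f (Icc 0 π) → IntervalIntegrable f volume 0 π :=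
    fun f hf => (hf.mono (by rw [uIcc_of_le hπ.le])).intervalIntegrable
  have hu_at : ∀ x ∈ Ioo (0:ℝ) π, HasDerivAt u (u' x) x := fun x hx =>
    (hu' x (Ioo_subset_Icc_self hx)).hasDerivAt (Icc_mem_nhds hx.1 hx.2)
  have hu'_at : ∀ x ∈ Ioo (0:ℝ) π, HasDerivAt u' (u'' x) x := fun x hx =>
    (hu'' x (Ioo_subset_Icc_self hx)).hasDerivAt (Icc_mem_nhds hx.1 hx.2)
  set I := ∫ x in (0:ℝ)..π, (u' x)^2 with hI
  set J := ∫ x in (0:ℝ)..π, (u x)^2 with hJ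
  set K := ∫ x in (0:ℝ)..π, (u x)^3 with hK
  set L := ∫ x in (0:ℝ)..π, (u x)^5 with hL
  -- integration by parts : ∫ (u'' u + u'^2) = 0
  have hA : ∫ x in (0:ℝ)..π, (u'' x * u x + (u' x)^2) = 0 := by
    rw [intervalIntegral.integral_eq_sub_of_hasDeriv_right_of_le hπ.le
      (f := fun x => u' x * u x) (f' := fun x => u'' x * u x + (u' x)^2) (hcu'.mul hcu)
      (fun x hx => by
        have : HasDerivWithinAt (fun x => u' x * u x) _ (Ioi x) x :=
          ((hu'_at x hx).mul (hu_at x hx)).hasDerivWithinAt (s := Ioi x)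
        refine this.congr_deriv ?_
        ring)
      (hii _ ((hcont.mul hcu).add (hcu'.pow 2)))]
    simp [hbc0, hbcpi]
  -- ∫ u' u = 0
  have hB : ∫ x in (0:ℝ)..π, u' x * u x = 0 := by
    rw [intervalIntegral.integral_eq_sub_of_hasDeriv_right_of_le hπ.le
      (f := fun x => (u x)^2 / 2) (f' := fun x => u' x * u x) ((hcu.pow 2).div_const 2)
      (fun x hx => by
        have : HasDerivWithinAt (fun x => (u x)^2 / 2) _ (Ioi x) x :=
          (((hu_at x hx).pow 2).div_const 2).hasDerivWithinAt (s := Ioi x)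
        refine this.congr_deriv ?_
        norm_num only
        ring)
      (hii _ (hcu'.mul hcu))]
    simp [hbc0, hbcpi]
  -- rewrite ∫ u'' u using the ODE
  have hC : ∫ x in (0:ℝ)..π, u'' x * u x
      = ∫ x in (0:ℝ)..π, (-(lam * (u' x * u x)) + (-((u x)^2) + (-(lam * (u x)^3) + (u x)^5))) := by
    apply intervalIntegral.integral_congr_ae
    have hne : ∀ᵐ x : ℝ, x ≠ π := by
      rw [MeasureTheory.ae_iff]
      simp
    filter_upwards [hne] with x hx hxΙ
    rw [uIoc_of_le hπ.le] at hxΙ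
    have hxo : x ∈ Ioo (0:ℝ) π := ⟨hxΙ.1, lt_of_le_of_ne hxΙ.2 hx⟩
    linear_combination (-(u x)) * hode x hxo
  have ii1 : IntervalIntegrable (fun x => -(lam * (u' x * u x))) volume 0 π :=
    ((hii _ (hcu'.mul hcu)).const_mul lam).neg
  have ii2 : IntervalIntegrable (fun x => -((u x)^2)) volume 0 π := (hii _ (hcu.pow 2)).neg
  have ii3 : IntervalIntegrable (fun x => -(lam * (u x)^3)) volume 0 π :=
    ((hii _ (hcu.pow 3)).const_mul lam).neg
  have ii4 : IntervalIntegrable (fun x => (u x)^5) volume 0 π := hii _ (hcu.pow 5)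
  have hCval : ∫ x in (0:ℝ)..π, u'' x * u x = -(lam * 0) + (-J + (-(lam * K) + L)) := by
    rw [hC, intervalIntegral.integral_add ii1 (ii2.add (ii3.add ii4)),
      intervalIntegral.integral_add ii2 (ii3.add ii4),
      intervalIntegral.integral_add ii3 ii4, intervalIntegral.integral_neg,
      intervalIntegral.integral_neg, intervalIntegral.integral_neg,
      intervalIntegral.integral_const_mul, intervalIntegral.integral_const_mul, hB]
  have hsplitA : ∫ x in (0:ℝ)..π, (u'' x * u x + (u' x)^2)
      = (∫ x in (0:ℝ)..π, u'' x * u x) + I := by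
    rw [intervalIntegral.integral_add (f := fun x => u'' x * u x) (g := fun x => (u' x)^2)
      (hii _ (hcont.mul hcu)) (hii _ (hcu'.pow 2))]
  have hmain : lam * K = I - J + L := by
    have := hA
    rw [hsplitA, hCval] at this
    linarith
  have hpoin : J ≤ I := my_poincare u u' hu' hcu' hbc0 hbcpi
  have hKpos : 0 < K := by
    apply intervalIntegral.intervalIntegral_pos_of_pos_on (hii _ (hcu.pow 3))
      (fun x hx => pow_pos (hpos x hx) 3) hπ
  have hLpos : 0 < L := by
    apply intervalIntegral.intervalIntegral_pos_of_pos_on (hii _ (hcu.pow 5))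
      (fun x hx => pow_pos (hpos x hx) 5) hπ
  nlinarith
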